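/- Let $a,b \in (0,\infty]$ and $g : \mathbb{R}^n \to \mathbb{R}^n$ be continuously differentiable. Define $F : (-a,b) \times \mathbb{R}^n \to (-a,b) \times \mathbb{R}^n$ by $F(U,X) = (U, X + g(X)\,\max(U,0))$. Then there exists an open set $W \subseteq (-a,b) \times \mathbb{R}^n$ containing $(-a,0] \times \mathbb{R}^n$ such that the restriction of $F$ to $W$ is injective. -/

import Mathlib

open Set

/-- For `a, b ∈ (0,∞]` and `g : ℝⁿ → ℝⁿ` continuously differentiable,
the map `F(U,X) = (U, X + max U 0 • g X)` on `(-a,b) × ℝⁿ` is injective on some open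
set `W` containing `(-a,0] × ℝⁿ`. -/
theorem stmt0 {n : ℕ} (a b : EReal) (ha : 0 < a) (hb : 0 < b)
    (g : EuclideanSpace ℝ (Fin n) → EuclideanSpace ℝ (Fin n)) (hg : ContDiff ℝ 1 g) :
    ∃ W : Set (ℝ × EuclideanSpace ℝ (Fin n)), IsOpen W ∧
      W ⊆ {p : ℝ × EuclideanSpace ℝ (Fin n) | -a < (p.1 : EReal) ∧ (p.1 : EReal) < b} ∧
      {p : ℝ × EuclideanSpace ℝ (Fin n) | -a < (p.1 : EReal) ∧ p.1 ≤ 0} ⊆ W ∧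
      Set.InjOn (fun p : ℝ × EuclideanSpace ℝ (Fin n) =>
        (p.1, p.2 + max p.1 0 • g p.2)) W := by
  classical
  -- On every closed ball of radius `m`, the derivative of `g` is bounded.
  have hder : Continuous fun x => ‖fderiv ℝ g x‖ :=
    (hg.continuous_fderiv one_ne_zero).norm
  have hex : ∀ m : ℕ, ∃ C : ℝ, 0 ≤ C ∧
      ∀ x ∈ Metric.closedBall (0 : EuclideanSpace ℝ (Fin n)) m, ‖fderiv ℝ g x‖ ≤ C := by
    intro m
    obtain ⟨C, hC⟩ := (isCompact_closedBall (0 : EuclideanSpace ℝ (Fin n)) m).exists_bound_of_continuousOn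
      (hder.continuousOn)
    refine ⟨max C 0, le_max_right _ _, fun x hx => ?_⟩
    have h := hC x hx
    rw [Real.norm_eq_abs, abs_of_nonneg (norm_nonneg _)] at h
    exact h.trans (le_max_left _ _)
  choose C hC0 hC using hex
  -- Monotone bound
  set M : ℕ → ℝ := fun m => ∑ i ∈ Finset.range (m + 1), C i with hM
  have hM0 : ∀ m, 0 ≤ M m := fun m => Finset.sum_nonneg fun i _ => hC0 i
  have hMmono : Monotone M := by
    intro i j hij
    exact Finset.sum_le_sum_of_subset_of_nonneg
      (Finset.range_subset_range.2 (by omega)) (fun k _ _ => hC0 k)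
  have hCM : ∀ m, C m ≤ M m := by
    intro m
    have := Finset.single_le_sum (f := C) (fun i _ => hC0 i)
      (Finset.self_mem_range_succ m)
    simpa [hM] using this
  -- Lipschitz-type estimate on the ball of radius m
  have hlip : ∀ m : ℕ, ∀ x ∈ Metric.closedBall (0 : EuclideanSpace ℝ (Fin n)) m,
      ∀ y ∈ Metric.closedBall (0 : EuclideanSpace ℝ (Fin n)) m,
      ‖g y - g x‖ ≤ M m * ‖y - x‖ := by
    intro m x hx y hy
    exact (convex_closedBall _ _).norm_image_sub_le_of_norm_fderiv_le
      (fun z _ => hg.differentiable one_ne_zero z)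
      (fun z hz => (hC m z hz).trans (hCM m)) hx hy
  refine ⟨⋃ m : ℕ, {p : ℝ × EuclideanSpace ℝ (Fin n) |
      -a < (p.1 : EReal) ∧ (p.1 : EReal) < b ∧ ‖p.2‖ < m ∧ max p.1 0 * M m < 1},
    ?_, ?_, ?_, ?_⟩
  · refine isOpen_iUnion fun m => ?_
    have h1 : IsOpen {p : ℝ × EuclideanSpace ℝ (Fin n) | -a < (p.1 : EReal)} :=
      isOpen_Ioi.preimage (continuous_coe_real_ereal.comp continuous_fst)
    have h2 : IsOpen {p : ℝ × EuclideanSpace ℝ (Fin n) | (p.1 : EReal) < b} :=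
      isOpen_Iio.preimage (continuous_coe_real_ereal.comp continuous_fst)
    have h3 : IsOpen {p : ℝ × EuclideanSpace ℝ (Fin n) | ‖p.2‖ < m} :=
      isOpen_lt (continuous_snd.norm) continuous_const
    have h4 : IsOpen {p : ℝ × EuclideanSpace ℝ (Fin n) | max p.1 0 * M m < 1} :=
      isOpen_lt (((continuous_fst.max continuous_const).mul continuous_const)) continuous_const
    simpa [Set.setOf_and] using h1.inter (h2.inter (h3.inter h4))
  · intro p hp
    simp only [Set.mem_iUnion, Set.mem_setOf_eq] at hp
    obtain ⟨m, h1, h2, _, _⟩ := hp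
    exact ⟨h1, h2⟩
  · intro p hp
    simp only [Set.mem_setOf_eq] at hp
    obtain ⟨m, hm⟩ := exists_nat_gt ‖p.2‖
    simp only [Set.mem_iUnion, Set.mem_setOf_eq]
    refine ⟨m, hp.1, ?_, hm, ?_⟩
    · calc (p.1 : EReal) ≤ (0 : ℝ) := by exact_mod_cast hp.2
        _ = (0 : EReal) := by norm_cast
        _ < b := hb
    · have : max p.1 0 = 0 := max_eq_right hp.2
      simp [this]
  · intro p hp q hq heq
    simp only [Set.mem_iUnion, Set.mem_setOf_eq] at hp hq
    obtain ⟨m₁, _, _, hpm, hpM⟩ := hp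
    obtain ⟨m₂, _, _, hqm, hqM⟩ := hq
    simp only [Prod.mk.injEq] at heq
    obtain ⟨h1, h2⟩ := heq
    rw [h1] at h2 hpM
    set t := max q.1 0 with ht
    have ht0 : 0 ≤ t := le_max_right _ _
    -- `p.2 - q.2 = t • (g q.2 - g p.2)`
    have hdiff : p.2 - q.2 = t • (g q.2 - g p.2) := by
      have h2' : p.2 + t • g p.2 = q.2 + t • g q.2 := h2
      rw [smul_sub]
      linear_combination (norm := module) h2'
    set N := max m₁ m₂ with hN
    have hpball : p.2 ∈ Metric.closedBall (0 : EuclideanSpace ℝ (Fin n)) N := by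
      simp only [Metric.mem_closedBall, dist_zero_right]
      exact hpm.le.trans (by exact_mod_cast le_max_left m₁ m₂)
    have hqball : q.2 ∈ Metric.closedBall (0 : EuclideanSpace ℝ (Fin n)) N := by
      simp only [Metric.mem_closedBall, dist_zero_right]
      exact hqm.le.trans (by exact_mod_cast le_max_right m₁ m₂)
    have htMN : t * M N < 1 := by
      rcases max_choice m₁ m₂ with h | h <;> rw [hN, h]
      · exact hpM
      · exact hqM
    have hkey : ‖p.2 - q.2‖ ≤ (t * M N) * ‖p.2 - q.2‖ := by
      calc ‖p.2 - q.2‖ = t * ‖g q.2 - g p.2‖ := by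
            rw [hdiff, norm_smul, Real.norm_eq_abs, abs_of_nonneg ht0]
        _ ≤ t * (M N * ‖q.2 - p.2‖) := by
            exact mul_le_mul_of_nonneg_left (hlip N p.2 hpball q.2 hqball) ht0
        _ = (t * M N) * ‖p.2 - q.2‖ := by rw [norm_sub_rev]; ring
    have h22 : p.2 = q.2 := by
      by_contra hne
      have hpos : 0 < ‖p.2 - q.2‖ := by
        simpa [sub_eq_zero] using norm_pos_iff.mpr (sub_ne_zero.mpr hne)
      have := (mul_lt_mul_of_pos_right htMN hpos)
      rw [one_mul] at this
      exact absurd (hkey.trans_lt this) (lt_irrefl _)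
    exact Prod.ext h1 h22
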